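/- Let F(x) = ∑_{u=1}^{k-z} x^{u-1} M_u + ∑_{τ=1}^{z} x^{k-z+τ-1} R_τ over F_q, where M_1,...,M_{k-z} are messages and R_1,...,R_z are independent uniform elements of F_q independent of the messages. Let α_1,...,α_n be distinct nonzero elements of F_q. Then for any T ⊆ [n] with |T| ≤ z, the shares (F(α_i))_{i∈T} are jointly independent of (M_1,...,M_{k-z}). -/

import Mathlib

open MeasureTheory ProbabilityTheory Finset

lemma aux_union {Ω β : Type*} (f : Ω → β) (s : Set β) :
    f ⁻¹' s = ⋃ b : s, f ⁻¹' {(b : β)} := by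
  ext ω; simp

lemma aux_indepFun_of_forall_singleton {Ω β γ : Type*} [MeasurableSpace Ω] (μ : Measure Ω)
    [MeasurableSpace β] [MeasurableSpace γ] [Countable β] [Countable γ]
    [MeasurableSingletonClass β] [MeasurableSingletonClass γ]
    {f : Ω → β} {g : Ω → γ} (hf : Measurable f) (hg : Measurable g)
    (h : ∀ b c, μ (f ⁻¹' {b} ∩ g ⁻¹' {c}) = μ (f ⁻¹' {b}) * μ (g ⁻¹' {c})) :
    IndepFun f g μ := by
  rw [indepFun_iff_measure_inter_preimage_eq_mul]
  intro s t _ _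
  have hst : f ⁻¹' s ∩ g ⁻¹' t = ⋃ p : s × t, f ⁻¹' {(p.1 : β)} ∩ g ⁻¹' {(p.2 : γ)} := by
    ext ω
    simp only [Set.mem_inter_iff, Set.mem_preimage, Set.mem_iUnion, Set.mem_singleton_iff]
    constructor
    · rintro ⟨hb, hc⟩; exact ⟨⟨⟨f ω, hb⟩, ⟨g ω, hc⟩⟩, rfl, rfl⟩
    · rintro ⟨⟨b, c⟩, hb, hc⟩; rw [hb, hc]; exact ⟨b.2, c.2⟩
  have hdisj : Pairwise (Function.onFun Disjoint
      fun p : s × t => f ⁻¹' {(p.1 : β)} ∩ g ⁻¹' {(p.2 : γ)}) := by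
    intro p q hpq
    have : (p.1 : β) ≠ (q.1 : β) ∨ (p.2 : γ) ≠ (q.2 : γ) := by
      by_contra hc
      push_neg at hc
      exact hpq (Prod.ext (Subtype.ext hc.1) (Subtype.ext hc.2))
    rcases this with h1 | h2
    · exact Set.disjoint_left.2 fun ω hω hω' => h1 (hω.1.symm.trans hω'.1)
    · exact Set.disjoint_left.2 fun ω hω hω' => h2 (hω.2.symm.trans hω'.2)
  rw [hst, measure_iUnion hdisj (fun p =>
    (hf (measurableSet_singleton _)).inter (hg (measurableSet_singleton _)))]
  have hfs : μ (f ⁻¹' s) = ∑' b : s, μ (f ⁻¹' {(b : β)}) := by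
    rw [aux_union f s]
    exact measure_iUnion (fun p q hpq => Set.disjoint_left.2 fun ω hω hω' =>
        hpq (Subtype.ext (hω.symm.trans hω'))) (fun b => hf (measurableSet_singleton _))
  have hgt : μ (g ⁻¹' t) = ∑' c : t, μ (g ⁻¹' {(c : γ)}) := by
    rw [aux_union g t]
    exact measure_iUnion (fun p q hpq => Set.disjoint_left.2 fun ω hω hω' =>
        hpq (Subtype.ext (hω.symm.trans hω'))) (fun c => hg (measurableSet_singleton _))
  rw [hfs, hgt]
  calc ∑' p : s × t, μ (f ⁻¹' {(p.1 : β)} ∩ g ⁻¹' {(p.2 : γ)})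
      = ∑' (b : s) (c : t), μ (f ⁻¹' {(b : β)}) * μ (g ⁻¹' {(c : γ)}) := by
        rw [ENNReal.tsum_prod (f := fun (b : s) (c : t) => μ (f ⁻¹' {(b : β)} ∩ g ⁻¹' {(c : γ)}))]
        simp_rw [h]
    _ = ∑' b : s, μ (f ⁻¹' {(b : β)}) * ∑' c : t, μ (g ⁻¹' {(c : γ)}) := by
        simp_rw [ENNReal.tsum_mul_left]
    _ = (∑' b : s, μ (f ⁻¹' {(b : β)})) * ∑' c : t, μ (g ⁻¹' {(c : γ)}) :=
        ENNReal.tsum_mul_right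

lemma aux_surj {F : Type*} [Field F] {n z : ℕ} (m : ℕ) (α : Fin n → F) (hα0 : ∀ i, α i ≠ 0)
    (hαinj : Function.Injective α) (T : Finset (Fin n)) (hT : T.card ≤ z) :
    Function.Surjective fun (r : Fin z → F) (i : {x // x ∈ T}) =>
      ∑ τ : Fin z, α i.1 ^ (m + (τ : ℕ)) * r τ := by
  classical
  intro y
  set c := T.card with hc
  let e : {x // x ∈ T} ≃ Fin c := T.equivFin
  let v : Fin c → F := fun a => α (e.symm a).1
  have hvinj : Function.Injective v := fun a b hab =>
    e.symm.injective (Subtype.ext (hαinj hab))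
  let W : Matrix (Fin c) (Fin c) F := Matrix.of fun a b => v a ^ (m + (b : ℕ))
  have hdet : W.det ≠ 0 := by
    have hW : W = Matrix.diagonal (fun a => v a ^ m) * Matrix.vandermonde v := by
      ext a b
      simp [W, Matrix.mul_apply, Matrix.diagonal, Matrix.vandermonde, pow_add,
        Finset.sum_ite_eq]
    rw [hW, Matrix.det_mul, Matrix.det_diagonal]
    refine mul_ne_zero (Finset.prod_ne_zero_iff.2 fun a _ => pow_ne_zero _ (hα0 _)) ?_
    exact Matrix.det_vandermonde_ne_zero_iff.2 hvinj
  have hWsurj : Function.Surjective W.mulVec :=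
    Matrix.mulVec_surjective_iff_isUnit.2
      ((Matrix.isUnit_iff_isUnit_det W).2 (isUnit_iff_ne_zero.2 hdet))
  obtain ⟨x, hx⟩ := hWsurj (fun a => y (e.symm a))
  refine ⟨fun τ => ∑ b : Fin c, if Fin.castLE hT b = τ then x b else 0, ?_⟩
  funext i
  have key : ∀ b : Fin c, W (e i) b = α i.1 ^ (m + (b : ℕ)) := by
    intro b; simp [W, v]
  calc (∑ τ : Fin z, α i.1 ^ (m + (τ : ℕ)) *
        ∑ b : Fin c, if Fin.castLE hT b = τ then x b else 0)
      = ∑ τ : Fin z, ∑ b : Fin c,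
          if Fin.castLE hT b = τ then α i.1 ^ (m + (τ : ℕ)) * x b else 0 := by
        refine Finset.sum_congr rfl fun τ _ => ?_
        rw [Finset.mul_sum]
        exact Finset.sum_congr rfl fun b _ => by split <;> simp
    _ = ∑ b : Fin c, ∑ τ : Fin z,
          if Fin.castLE hT b = τ then α i.1 ^ (m + (τ : ℕ)) * x b else 0 :=
        Finset.sum_comm
    _ = ∑ b : Fin c, α i.1 ^ (m + (b : ℕ)) * x b := by
        refine Finset.sum_congr rfl fun b _ => ?_
        rw [Finset.sum_ite_eq]
        simp [Fin.coe_castLE]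
    _ = W.mulVec x (e i) := by
        simp [Matrix.mulVec, dotProduct, key]
    _ = y i := by rw [hx]; simp

lemma aux_fiber {β γ : Type*} [Fintype β] [Fintype γ] [DecidableEq γ]
    [AddCommGroup β] [AddCommGroup γ]
    (A : β →+ γ) (hsurj : Function.Surjective A) (w : γ) :
    Fintype.card {r : β // A r = w} * Fintype.card γ = Fintype.card β := by
  classical
  have hcongr : ∀ w' : γ,
      Fintype.card {r : β // A r = w'} = Fintype.card {r : β // A r = w} := by
    intro w'
    obtain ⟨d, hd⟩ := hsurj (w - w')
    refine Fintype.card_congr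
      ⟨fun r => ⟨r.1 + d, by rw [map_add, r.2, hd]; abel⟩,
       fun r => ⟨r.1 - d, by rw [map_sub, r.2, hd]; abel⟩,
       fun r => by simp, fun r => by simp⟩
  have hβ : Fintype.card β = ∑ w' : γ, Fintype.card {r : β // A r = w'} := by
    rw [← Fintype.card_sigma]
    exact Fintype.card_congr (Equiv.sigmaFiberEquiv A).symm
  rw [hβ, Finset.sum_congr rfl fun w' _ => hcongr w', Finset.sum_const,
    Finset.card_univ, smul_eq_mul, mul_comm]

/-- z-privacy of McEliece–Sarwate ramp sharing: with
`F(x) = ∑_{u=1}^{k-z} x^{u-1} M_u + ∑_{τ=1}^{z} x^{k-z+τ-1} R_τ`, messages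
`M_u`, mutually independent uniform masks `R_τ` independent of the message
vector, and distinct nonzero evaluation points `α_1,…,α_n`, the shares of any
set `T` with `|T| ≤ z` are jointly independent of `(M_1,…,M_{k-z})`. -/
theorem stmt8 {Ω : Type*} [MeasurableSpace Ω] (μ : Measure Ω) [IsProbabilityMeasure μ]
    {F : Type*} [Field F] [Fintype F] [MeasurableSpace F] [MeasurableSingletonClass F]
    (k z n : ℕ) (hzk : z ≤ k)
    (M : Fin (k - z) → Ω → F) (R : Fin z → Ω → F)
    (hMmeas : ∀ u, Measurable (M u)) (hRmeas : ∀ τ, Measurable (R τ))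
    (hRindep : iIndepFun R μ)
    (hMRindep : IndepFun (fun ω => fun u => M u ω) (fun ω => fun τ => R τ ω) μ)
    (hRunif : ∀ (τ : Fin z) (v : F), μ (R τ ⁻¹' {v}) = (Fintype.card F : ENNReal)⁻¹)
    (α : Fin n → F) (hα0 : ∀ i, α i ≠ 0) (hαinj : Function.Injective α)
    (T : Finset (Fin n)) (hT : T.card ≤ z) :
    IndepFun
      (fun ω => fun i : T =>
        (∑ u : Fin (k - z), α i.1 ^ (u : ℕ) * M u ω)
        + ∑ τ : Fin z, α i.1 ^ (k - z + (τ : ℕ)) * R τ ω)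
      (fun ω => fun u => M u ω) μ := by
  classical
  set Mv : Ω → (Fin (k - z) → F) := fun ω u => M u ω with hMvdef
  set Rv : Ω → (Fin z → F) := fun ω τ => R τ ω with hRvdef
  set A : (Fin z → F) → ({x // x ∈ T} → F) :=
    fun r i => ∑ τ : Fin z, α i.1 ^ (k - z + (τ : ℕ)) * r τ with hAdef
  set fm : (Fin (k - z) → F) → ({x // x ∈ T} → F) :=
    fun m0 i => ∑ u : Fin (k - z), α i.1 ^ (u : ℕ) * m0 u with hfmdef
  set X : Ω → ({x // x ∈ T} → F) := fun ω => fun i => fm (Mv ω) i + A (Rv ω) i with hXdef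
  show IndepFun X Mv μ
  -- basic card facts
  set a : ENNReal := (Fintype.card F : ENNReal) with hadef
  have ha0 : a ≠ 0 := by
    simp [hadef, Nat.cast_eq_zero, Fintype.card_ne_zero]
  have hatop : a ≠ ⊤ := by simp [hadef]
  -- measurability
  have hMvmeas : Measurable Mv := measurable_pi_lambda _ hMmeas
  have hRvmeas : Measurable Rv := measurable_pi_lambda _ hRmeas
  have hXmeas : Measurable X := by
    have : X = (fun p : (Fin (k - z) → F) × (Fin z → F) =>
        fun i => fm p.1 i + A p.2 i) ∘ (fun ω => (Mv ω, Rv ω)) := rfl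
    rw [this]
    exact (measurable_of_countable _).comp (hMvmeas.prodMk hRvmeas)
  -- uniform distribution of the mask vector
  have hRvunif : ∀ r : Fin z → F, μ (Rv ⁻¹' {r}) = a⁻¹ ^ z := by
    intro r
    have hpre : Rv ⁻¹' {r} = ⋂ τ, R τ ⁻¹' {r τ} := by
      ext ω
      simp [hRvdef, funext_iff]
    rw [hpre, hRindep.meas_iInter (fun τ => ⟨{r τ}, measurableSet_singleton _, rfl⟩)]
    simp [hRunif, hadef]
  have hRvS : ∀ S : Set (Fin z → F), μ (Rv ⁻¹' S) = S.toFinset.card * a⁻¹ ^ z := by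
    intro S
    rw [aux_union Rv S, measure_iUnion
      (fun p q hpq => Set.disjoint_left.2 fun ω hω hω' =>
        hpq (Subtype.ext (hω.symm.trans hω')))
      (fun b => hRvmeas (measurableSet_singleton _))]
    simp_rw [hRvunif]
    rw [tsum_fintype, Finset.sum_const, Finset.card_univ, nsmul_eq_mul]
    congr 1
    rw [Set.toFinset_card]
  -- surjectivity of the mask map
  have hAsurj : Function.Surjective A := by
    rw [hAdef]
    exact fun y => aux_surj (k - z) α hα0 hαinj T hT y
  -- the mask map as an additive hom
  have hAadd : ∀ x y : Fin z → F, A (x + y) = A x + A y := by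
    intro x y
    funext i
    simp [hAdef, mul_add, Finset.sum_add_distrib]
  have hAzero : A 0 = 0 := by
    funext i; simp [hAdef]
  set Ahom : (Fin z → F) →+ ({x // x ∈ T} → F) :=
    { toFun := A, map_zero' := hAzero, map_add' := hAadd } with hAhomdef
  -- fiber cardinalities
  have hfib : ∀ w : {x // x ∈ T} → F,
      ((A ⁻¹' {w}).toFinset.card : ℕ) = Fintype.card F ^ (z - T.card) := by
    intro w
    have h1 : (A ⁻¹' {w}).toFinset.card = Fintype.card {r : Fin z → F // Ahom r = w} := by
      rw [Set.toFinset_card]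
      exact Fintype.card_congr (Equiv.subtypeEquivRight (fun r => by
        simp [hAhomdef]))
    have h2 := aux_fiber Ahom hAsurj w
    rw [h1]
    have hcardT : Fintype.card ({x // x ∈ T} → F) = Fintype.card F ^ T.card := by
      rw [Fintype.card_fun, Fintype.card_coe]
    have hcardz : Fintype.card (Fin z → F) = Fintype.card F ^ z := by
      rw [Fintype.card_fun, Fintype.card_fin]
    rw [hcardT, hcardz] at h2
    have hzsplit : Fintype.card F ^ z
        = Fintype.card F ^ (z - T.card) * Fintype.card F ^ T.card := by
      rw [← pow_add, Nat.sub_add_cancel hT]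
    rw [hzsplit] at h2
    exact Nat.eq_of_mul_eq_mul_right (pow_pos Fintype.card_pos _) h2
  -- uniformity of the masked shares fibers
  have hmask : ∀ w : {x // x ∈ T} → F,
      μ (Rv ⁻¹' (A ⁻¹' {w})) = a⁻¹ ^ T.card := by
    intro w
    rw [hRvS, hfib w]
    push_cast
    rw [← hadef]
    set zc := z - T.card with hzc
    have hzz : z = zc + T.card := (Nat.sub_add_cancel hT).symm
    have hcancel : a ^ zc * a⁻¹ ^ zc = 1 := by
      rw [← mul_pow, ENNReal.mul_inv_cancel ha0 hatop, one_pow]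
    rw [hzz, pow_add, ← mul_assoc, hcancel, one_mul]
  -- joint measure computation
  have hjoint : ∀ (b : {x // x ∈ T} → F) (m0 : Fin (k - z) → F),
      μ (X ⁻¹' {b} ∩ Mv ⁻¹' {m0}) = μ (Mv ⁻¹' {m0}) * a⁻¹ ^ T.card := by
    intro b m0
    have hsplit : X ⁻¹' {b} ∩ Mv ⁻¹' {m0}
        = Mv ⁻¹' {m0} ∩ Rv ⁻¹' (A ⁻¹' {b - fm m0}) := by
      ext ω
      simp only [Set.mem_inter_iff, Set.mem_preimage, Set.mem_singleton_iff]
      constructor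
      · rintro ⟨hXb, hMm⟩
        refine ⟨hMm, ?_⟩
        funext i
        have := congrFun hXb i
        simp only [hXdef] at this
        rw [hMm] at this
        simp only [Pi.sub_apply]
        exact eq_sub_of_add_eq' this
      · rintro ⟨hMm, hAr⟩
        refine ⟨?_, hMm⟩
        funext i
        have := congrFun hAr i
        simp only [Pi.sub_apply] at this
        simp only [hXdef, hMm, this]
        ring
    rw [hsplit, hMRindep.measure_inter_preimage_eq_mul _ _
      ((Set.to_countable _).measurableSet) ((Set.to_countable _).measurableSet),
      hmask]
  -- marginal of the shares
  have hXsing : ∀ b : {x // x ∈ T} → F, μ (X ⁻¹' {b}) = a⁻¹ ^ T.card := by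
    intro b
    have hcover : X ⁻¹' {b} = ⋃ m0 : Fin (k - z) → F, (X ⁻¹' {b} ∩ Mv ⁻¹' {m0}) := by
      ext ω
      simp only [Set.mem_iUnion, Set.mem_inter_iff, Set.mem_preimage,
        Set.mem_singleton_iff]
      exact ⟨fun h => ⟨Mv ω, h, rfl⟩, fun ⟨m0, h, _⟩ => h⟩
    have hdisj : Pairwise (Function.onFun Disjoint
        fun m0 : Fin (k - z) → F => X ⁻¹' {b} ∩ Mv ⁻¹' {m0}) := by
      intro p q hpq
      exact Set.disjoint_left.2 fun ω hω hω' => hpq (hω.2.symm.trans hω'.2)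
    rw [hcover, measure_iUnion hdisj (fun m0 =>
      (hXmeas (measurableSet_singleton _)).inter (hMvmeas (measurableSet_singleton _)))]
    simp_rw [hjoint b]
    rw [ENNReal.tsum_mul_right]
    have htot : ∑' m0 : Fin (k - z) → F, μ (Mv ⁻¹' {m0}) = 1 := by
      have : ⋃ m0 : Fin (k - z) → F, Mv ⁻¹' {m0} = Set.univ := by
        ext ω; simp
      rw [← measure_iUnion (fun p q hpq => Set.disjoint_left.2 fun ω hω hω' =>
          hpq (hω.symm.trans hω')) (fun m0 => hMvmeas (measurableSet_singleton _)),
        this, measure_univ]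
    rw [htot, one_mul]
  -- conclude
  refine aux_indepFun_of_forall_singleton μ hXmeas hMvmeas fun b m0 => ?_
  rw [hjoint, hXsing, mul_comm]
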